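/- For every n ∈ ℕ with n ≥ 1 and every 1 ≤ p ≤ ∞, the least doubling constant of ℝⁿ with the ℓ^p metric equals 2ⁿ; that is, the infimum over all doubling measures μ on (ℝⁿ, ‖·‖_p) of C_μ equals 2ⁿ. -/

import Mathlib

open MeasureTheory Metric Filter

noncomputable def doublingConstant {X : Type*} [PseudoMetricSpace X] [MeasurableSpace X]
    (μ : Measure X) : ENNReal :=
  ⨆ (x : X) (r : ℝ) (_ : 0 < r), μ (ball x (2 * r)) / μ (ball x r)

lemma piLp_norm_le_sum (p : ENNReal) [Fact (1 ≤ p)] {n : ℕ}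
    (x : PiLp p (fun _ : Fin n => ℝ)) : ‖x‖ ≤ ∑ i, |x i| := by
  set L := WithLp.linearEquiv p ℝ (Fin n → ℝ) with hL
  have key : ∑ i, Pi.single i (L x i) = L x := by
    funext j; simp [Finset.sum_apply, Pi.single_apply]
  have hx : x = ∑ i, L.symm (Pi.single i (x i)) := by
    conv_lhs => rw [← L.symm_apply_apply x, ← key]
    rw [map_sum]; rfl
  calc ‖x‖ = ‖∑ i, L.symm (Pi.single i (x i))‖ := by rw [← hx]
    _ ≤ ∑ i, ‖L.symm (Pi.single i (x i))‖ := norm_sum_le _ _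
    _ = ∑ i, |x i| := by
        refine Finset.sum_congr rfl fun i _ => ?_
        exact (PiLp.norm_toLp_single p (fun _ : Fin n => ℝ) i (x i)).trans
          (Real.norm_eq_abs _)

lemma piLp_dist_coord_le (p : ENNReal) [Fact (1 ≤ p)] {n : ℕ}
    (x y : PiLp p (fun _ : Fin n => ℝ)) (i : Fin n) :
    dist (x i) (y i) ≤ dist x y := by
  refine le_trans (dist_le_pi_dist (WithLp.equiv p _ x) (WithLp.equiv p _ y) i) ?_
  simpa using (PiLp.lipschitzWith_ofLp p _).dist_le_mul x y

lemma lower_bound (n : ℕ) (hn : 1 ≤ n) (p : ENNReal) [Fact (1 ≤ p)]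
    [MeasurableSpace (PiLp p (fun _ : Fin n => ℝ))]
    [BorelSpace (PiLp p (fun _ : Fin n => ℝ))]
    (μ : Measure (PiLp p (fun _ : Fin n => ℝ)))
    (hpos : ∀ (x : PiLp p (fun _ : Fin n => ℝ)) (r : ℝ), 0 < r →
      0 < μ (ball x r) ∧ μ (ball x r) < ⊤) :
    (2 : ENNReal) ^ n ≤ doublingConstant μ := by
  have hn0 : (n:ℝ) ≠ 0 := Nat.cast_ne_zero.2 (by omega)
  have hnpos : (0:ℝ) < n := by positivity
  set C := doublingConstant μ with hCdef
  by_contra hcon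
  push_neg at hcon
  have h2top : (2:ENNReal) ^ n ≠ ⊤ := by
    exact (ENNReal.pow_lt_top (by norm_num)).ne
  have hCtop : C ≠ ⊤ := (hcon.trans_le le_top).ne
  -- basic ratio bound
  have hratio : ∀ (x : PiLp p (fun _ : Fin n => ℝ)) (r : ℝ), 0 < r → μ (ball x (2*r)) / μ (ball x r) ≤ C := by
    intro x r hr
    exact le_iSup_of_le x (le_iSup_of_le r (le_iSup_of_le hr le_rfl))
  have hstep : ∀ (x : PiLp p (fun _ : Fin n => ℝ)) (r : ℝ), 0 < r → μ (ball x (2*r)) ≤ C * μ (ball x r) := by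
    intro x r hr
    exact (ENNReal.div_le_iff (hpos x r hr).1.ne' (hpos x r hr).2.ne).1 (hratio x r hr)
  have hiter : ∀ (x : PiLp p (fun _ : Fin n => ℝ)) (r : ℝ) (k : ℕ), 0 < r →
      μ (ball x (2^k * r)) ≤ C^k * μ (ball x r) := by
    intro x r k hr
    induction k with
    | zero => simp
    | succ k ih =>
      have h2 : (2:ℝ)^(k+1) * r = 2 * (2^k * r) := by ring
      rw [h2, pow_succ']
      calc μ (ball x (2*(2^k*r))) ≤ C * μ (ball x (2^k*r)) := hstep x _ (by positivity)
        _ ≤ C * (C^k * μ (ball x r)) := mul_le_mul_right ih _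
        _ = C * C^k * μ (ball x r) := (mul_assoc _ _ _).symm
  have hC1 : (1:ENNReal) ≤ C := by
    refine le_trans ?_ (hratio 0 1 one_pos)
    rw [ENNReal.le_div_iff_mul_le (Or.inl (hpos 0 1 one_pos).1.ne')
      (Or.inl (hpos 0 1 one_pos).2.ne), one_mul]
    exact measure_mono (ball_subset_ball (by norm_num))
  -- packing claim
  have claim : ∀ M : ℕ, 0 < M → ∀ k : ℕ, (2:ℝ) ≤ 2^k * (1/(4*n*M)) →
      ((M:ENNReal))^n ≤ C^k := by
    intro M hM k hk
    have hM0 : (M:ℝ) ≠ 0 := Nat.cast_ne_zero.2 hM.ne'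
    have hMpos : (0:ℝ) < M := by positivity
    set s : ℝ := 1/(4*n*M) with hs
    have hs0 : 0 < s := by positivity
    have hsle : s ≤ 1/4 := by
      rw [hs]
      rw [div_le_div_iff₀ (by positivity) (by norm_num)]
      have h1 : (1:ℝ) ≤ (n:ℝ) := by exact_mod_cast hn
      have h2 : (1:ℝ) ≤ (M:ℝ) := by exact_mod_cast hM
      nlinarith
    set y : (Fin n → Fin M) → PiLp p (fun _ : Fin n => ℝ) :=
      fun a => (WithLp.equiv p (Fin n → ℝ)).symm (fun i => 2*s*((a i : ℕ) : ℝ)) with hy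
    have hcoord : ∀ a i, (y a) i = 2*s*((a i : ℕ) : ℝ) := fun a i => rfl
    have hynorm : ∀ a, ‖y a‖ ≤ 1/2 := by
      intro a
      calc ‖y a‖ ≤ ∑ i, |(y a) i| := piLp_norm_le_sum p _
        _ ≤ ∑ _i : Fin n, 2*s*M := by
            refine Finset.sum_le_sum fun i _ => ?_
            rw [hcoord, abs_of_nonneg (by positivity)]
            have : ((a i : ℕ) : ℝ) ≤ M := by exact_mod_cast (a i).isLt.le
            nlinarith
        _ = 1/2 := by
            rw [Finset.sum_const, Finset.card_univ, Fintype.card_fin, nsmul_eq_mul, hs]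
            field_simp
            ring
    have hdisj : ∀ a b : Fin n → Fin M, a ≠ b →
        Disjoint (ball (y a) s) (ball (y b) s) := by
      intro a b hab
      obtain ⟨i, hi⟩ := Function.ne_iff.1 hab
      apply ball_disjoint_ball
      have hvi : (a i : ℕ) ≠ (b i : ℕ) := fun h => hi (Fin.ext h)
      have habs : (1:ℝ) ≤ |((a i : ℕ) : ℝ) - ((b i : ℕ) : ℝ)| := by
        have h1 : (1:ℤ) ≤ |((a i : ℕ) : ℤ) - ((b i : ℕ) : ℤ)| :=
          Int.one_le_abs (sub_ne_zero.2 (by exact_mod_cast hvi))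
        exact_mod_cast h1
      have h1 : 2*s ≤ dist ((y a) i) ((y b) i) := by
        rw [Real.dist_eq, hcoord, hcoord, ← mul_sub, abs_mul, abs_of_nonneg (by positivity)]
        nlinarith
      calc s + s = 2*s := by ring
        _ ≤ dist ((y a) i) ((y b) i) := h1
        _ ≤ dist (y a) (y b) := piLp_dist_coord_le p _ _ i
    have hsub1 : ∀ a, ball (y a) s ⊆ ball (0 : PiLp p (fun _ : Fin n => ℝ)) 1 := by
      intro a z hz
      rw [mem_ball] at hz ⊢
      rw [dist_zero_right]
      calc ‖z‖ ≤ dist z (y a) + ‖y a‖ := by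
            simpa [dist_zero_right] using dist_triangle z (y a) 0
        _ < s + 1/2 := by linarith [hynorm a]
        _ ≤ 1 := by linarith
    have hsub2 : ∀ a, ball (0 : PiLp p (fun _ : Fin n => ℝ)) 1 ⊆ ball (y a) (2^k * s) := by
      intro a z hz
      rw [mem_ball] at hz ⊢
      rw [dist_zero_right] at hz
      calc dist z (y a) ≤ ‖z‖ + ‖y a‖ := by
            simpa [dist_zero_right] using dist_triangle z 0 (y a)
        _ < 1 + 1/2 := by linarith [hynorm a]
        _ ≤ 2^k * s := by linarith
    have hb1 := hpos (0 : PiLp p (fun _ : Fin n => ℝ)) 1 one_pos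
    have hMa : ∀ a, μ (ball (0 : PiLp p (fun _ : Fin n => ℝ)) 1) ≤ C^k * μ (ball (y a) s) := fun a =>
      (measure_mono (hsub2 a)).trans (hiter (y a) s k hs0)
    have hsum : ∑ a : (Fin n → Fin M), μ (ball (y a) s) ≤ μ (ball (0 : PiLp p (fun _ : Fin n => ℝ)) 1) := by
      rw [← measure_biUnion_finset (fun a _ b _ hab => hdisj a b hab)
        (fun a _ => measurableSet_ball)]
      exact measure_mono (Set.iUnion₂_subset fun a _ => hsub1 a)
    have hcount : ((M:ENNReal))^n * μ (ball (0 : PiLp p (fun _ : Fin n => ℝ)) 1) ≤ C^k * μ (ball (0 : PiLp p (fun _ : Fin n => ℝ)) 1) := by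
      calc ((M:ENNReal))^n * μ (ball (0 : PiLp p (fun _ : Fin n => ℝ)) 1)
          = ∑ _a : (Fin n → Fin M), μ (ball (0 : PiLp p (fun _ : Fin n => ℝ)) 1) := by
            rw [Finset.sum_const, Finset.card_univ, Fintype.card_fun, Fintype.card_fin,
              Fintype.card_fin, nsmul_eq_mul, Nat.cast_pow]
        _ ≤ ∑ a : (Fin n → Fin M), C^k * μ (ball (y a) s) :=
            Finset.sum_le_sum fun a _ => hMa a
        _ = C^k * ∑ a : (Fin n → Fin M), μ (ball (y a) s) := by
            rw [Finset.mul_sum]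
        _ ≤ C^k * μ (ball (0 : PiLp p (fun _ : Fin n => ℝ)) 1) := mul_le_mul_right hsum _
    exact (ENNReal.mul_le_mul_iff_left hb1.1.ne' hb1.2.ne).1 hcount
  -- convert to reals and derive a contradiction
  set c := C.toReal with hc
  have hc1 : (1:ℝ) ≤ c := by
    have := ENNReal.toReal_mono hCtop hC1
    simpa using this
  have hc0 : (0:ℝ) < c := lt_of_lt_of_le one_pos hc1
  have hcn : c < 2^n := by
    have := (ENNReal.toReal_lt_toReal hCtop h2top).2 hcon
    simpa [ENNReal.toReal_pow] using this
  have h2n : (n:ℝ) ≤ 2^n := by exact_mod_cast (Nat.lt_two_pow_self (n := n)).le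
  have key2 : ∀ j : ℕ, ((2:ℝ)^n)^j ≤ c^j * c^(n+3) := by
    intro j
    have hMpos : 0 < 2^j := Nat.pow_pos (by norm_num)
    have hkineq : (2:ℝ) ≤ 2^(j+(n+3)) * (1/(4*n*((2^j : ℕ) : ℝ))) := by
      have heq : (2:ℝ)^(j+(n+3)) * (1/(4*n*((2^j : ℕ) : ℝ))) = 2^n * 2 / n := by
        push_cast
        rw [pow_add]
        have h2j : (2:ℝ)^j ≠ 0 := by positivity
        field_simp
        ring
      rw [heq, le_div_iff₀ hnpos]
      nlinarith
    have hEN := claim (2^j) hMpos (j+(n+3)) hkineq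
    have hfin : C^(j+(n+3)) ≠ ⊤ := ENNReal.pow_ne_top hCtop
    have hre := ENNReal.toReal_mono hfin hEN
    rw [ENNReal.toReal_pow, ENNReal.toReal_pow, ENNReal.toReal_natCast] at hre
    calc ((2:ℝ)^n)^j = (((2^j : ℕ) : ℝ))^n := by
          push_cast; rw [← pow_mul, ← pow_mul, Nat.mul_comm]
      _ ≤ c^(j+(n+3)) := hre
      _ = c^j * c^(n+3) := pow_add c j (n+3)
  set q : ℝ := 2^n / c with hq
  have hq1 : 1 < q := (one_lt_div hc0).2 hcn
  have hbdd : ∀ j : ℕ, q^j ≤ c^(n+3) := by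
    intro j
    have hcj : (0:ℝ) < c^j := pow_pos hc0 j
    rw [hq, div_pow, div_le_iff₀ hcj]
    calc ((2:ℝ)^n)^j ≤ c^j * c^(n+3) := key2 j
      _ = c^(n+3) * c^j := mul_comm _ _
  obtain ⟨j, hj⟩ := ((tendsto_pow_atTop_atTop_of_one_lt hq1).eventually_gt_atTop
    (c^(n+3))).exists
  exact absurd (hbdd j) (not_le.2 hj)

theorem stmt_15 (n : ℕ) (hn : 1 ≤ n) (p : ENNReal) [Fact (1 ≤ p)]
    [MeasurableSpace (PiLp p (fun _ : Fin n => ℝ))]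
    [BorelSpace (PiLp p (fun _ : Fin n => ℝ))] :
    (⨅ μ : {μ : Measure (PiLp p (fun _ : Fin n => ℝ)) //
        (∀ (x : PiLp p (fun _ : Fin n => ℝ)) (r : ℝ), 0 < r →
          0 < μ (ball x r) ∧ μ (ball x r) < ⊤) ∧
        ∃ C : ENNReal, C < ⊤ ∧ ∀ (x : PiLp p (fun _ : Fin n => ℝ)) (r : ℝ), 0 < r →
          μ (ball x (2 * r)) ≤ C * μ (ball x r)},
      doublingConstant μ.1) = 2 ^ n := by
  apply le_antisymm
  · set μ₀ : Measure (PiLp p (fun _ : Fin n => ℝ)) := Measure.addHaar with hμ₀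
    have hd : Module.finrank ℝ (PiLp p (fun _ : Fin n => ℝ)) = n := by
      rw [(WithLp.linearEquiv p ℝ _).finrank_eq]; simp
    have hball : ∀ (x : PiLp p (fun _ : Fin n => ℝ)) (r : ℝ), 0 < r →
        μ₀ (ball x (2 * r)) = 2^n * μ₀ (ball x r) := by
      intro x r hr
      rw [hμ₀, Measure.addHaar_ball_mul_of_pos _ x two_pos r,
        Measure.addHaar_ball_center _ x r, hd]
      congr 1
      rw [ENNReal.ofReal_pow (by norm_num)]
      norm_num
    have hprops : (∀ (x : PiLp p (fun _ : Fin n => ℝ)) (r : ℝ), 0 < r →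
        0 < μ₀ (ball x r) ∧ μ₀ (ball x r) < ⊤) := by
      intro x r hr
      exact ⟨measure_ball_pos μ₀ x hr, measure_ball_lt_top⟩
    have h2top : (2:ENNReal)^n < ⊤ := ENNReal.pow_lt_top (by norm_num)
    refine le_trans (iInf_le _ ⟨μ₀, hprops, ⟨2^n, h2top, fun x r hr =>
      le_of_eq (hball x r hr)⟩⟩) ?_
    apply iSup_le; intro x; apply iSup_le; intro r; apply iSup_le; intro hr
    rw [hball x r hr]
    rw [ENNReal.div_le_iff (hprops x r hr).1.ne' (hprops x r hr).2.ne]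
  · exact le_iInf fun μ => lower_bound n hn p μ.1 μ.2.1
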